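/- Under the same hypotheses (k ≥ 1, 1 ≤ s ≤ 2^{k−1}, ŝ = 2(2s − 1), Y twice continuously differentiable on [0, 2] with |Y''| ≤ H on [0, 2], and Λ_{s,m} = ∫_{(ŝ−2)/2^k}^{(ŝ+2)/2^k} Y(ζ)·2^{k/2}·(1/√(2π))·VL_m(2^kζ − ŝ)·(1/√(4 − (2^kζ − ŝ)²)) dζ), for every m ≥ 2 one has |Λ_{s,m}| ≤ H·√π / (s^{5/2}·(m² − 1)). -/

import Mathlib

set_option maxHeartbeats 1000000

open Real MeasureTheory

/-- The Vieta–Lucas polynomials, defined recursively. -/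
noncomputable def VL : ℕ → ℝ → ℝ
  | 0, _ => 2
  | 1, ζ => ζ
  | (m + 2), ζ => ζ * VL (m + 1) ζ - VL m ζ

lemma VL_two_cos : ∀ (m : ℕ) (θ : ℝ), VL m (2 * Real.cos θ) = 2 * Real.cos (m * θ)
  | 0, θ => by simp [VL]
  | 1, θ => by simp [VL]
  | (m + 2), θ => by
      rw [show VL (m+2) (2*Real.cos θ) = (2*Real.cos θ) * VL (m+1) (2*Real.cos θ) - VL m (2*Real.cos θ) from rfl,
        VL_two_cos (m+1) θ, VL_two_cos m θ]
      push_cast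
      rw [show ((m:ℝ)+2)*θ = (((m:ℝ)+1)*θ) + θ by ring, show (m:ℝ)*θ = (((m:ℝ)+1)*θ) - θ by ring,
        Real.cos_add, Real.cos_sub]
      ring

lemma ibp_cos {g g' : ℝ → ℝ} (hg : ∀ x, HasDerivAt g (g' x) x) (hg' : Continuous g')
    (n : ℕ) (hn : 1 ≤ n) :
    ∫ θ in (0:ℝ)..π, g θ * Real.cos (n*θ) = -(1/n) * ∫ θ in (0:ℝ)..π, g' θ * Real.sin (n*θ) := by
  have hn0 : (n:ℝ) ≠ 0 := Nat.cast_ne_zero.mpr (by omega)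
  have hv : ∀ x : ℝ, HasDerivAt (fun θ => Real.sin (n*θ)/n) (Real.cos (n*x)) x := by
    intro x
    have h1 : HasDerivAt (fun θ : ℝ => (n:ℝ)*θ) n x := by
      simpa using (hasDerivAt_id x).const_mul (n:ℝ)
    have h2 := ((Real.hasDerivAt_sin ((n:ℝ)*x)).comp x h1).div_const (n:ℝ)
    rw [mul_div_cancel_right₀ _ hn0] at h2
    exact h2
  have key := intervalIntegral.integral_mul_deriv_eq_deriv_mul
    (u := g) (v := fun θ => Real.sin (n*θ)/n) (u' := g') (v' := fun θ => Real.cos (n*θ))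
    (a := 0) (b := π)
    (fun x _ => hg x) (fun x _ => hv x)
    (hg'.intervalIntegrable 0 π)
    ((Real.continuous_cos.comp (continuous_const.mul continuous_id)).intervalIntegrable 0 π)
  have hs1 : Real.sin ((n:ℝ)*π) = 0 := Real.sin_nat_mul_pi n
  have hs0 : Real.sin ((n:ℝ)*0) = 0 := by simp
  simp only [hs1, hs0, Real.sin_zero, zero_div, mul_zero, sub_zero, zero_sub] at key
  have : ∀ x : ℝ, g' x * (Real.sin (n*x)/n) = (1/n) * (g' x * Real.sin (n*x)) := fun x => by ring
  simp_rw [this] at key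
  rw [intervalIntegral.integral_const_mul] at key
  rw [key]; ring

theorem vieta_lucas_wavelet_coefficient_bound_s
    (k s : ℕ) (hk : 1 ≤ k) (hs1 : 1 ≤ s) (hs2 : s ≤ 2 ^ (k - 1))
    (Y : ℝ → ℝ) (H : ℝ) (hH : 0 ≤ H)
    (hY : ContDiffOn ℝ 2 Y (Set.Icc (0 : ℝ) 2))
    (hY'' : ∀ ζ ∈ Set.Icc (0 : ℝ) 2,
      |iteratedDerivWithin 2 Y (Set.Icc (0 : ℝ) 2) ζ| ≤ H)
    (sh : ℝ) (hsh : sh = 2 * (2 * (s : ℝ) - 1))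
    (Λ : ℕ → ℝ)
    (hΛ : ∀ m : ℕ, Λ m =
      ∫ ζ in ((sh - 2) / 2 ^ k)..((sh + 2) / 2 ^ k),
        Y ζ * 2 ^ ((k : ℝ) / 2) * (1 / Real.sqrt (2 * π)) *
          VL m (2 ^ k * ζ - sh) * (1 / Real.sqrt (4 - (2 ^ k * ζ - sh) ^ 2))) :
    ∀ m : ℕ, 2 ≤ m →
      |Λ m| ≤ H * Real.sqrt π / ((s : ℝ) ^ ((5 : ℝ) / 2) * ((m : ℝ) ^ 2 - 1)) := by
  intro m hm
  obtain ⟨k', rfl⟩ : ∃ k' : ℕ, k = k' + 1 := ⟨k - 1, by omega⟩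
  simp only [Nat.add_sub_cancel] at hs2
  have hKpos : (0:ℝ) < 2 ^ (k'+1) := by positivity
  have hKne : ((2:ℝ) ^ (k'+1)) ≠ 0 := ne_of_gt hKpos
  have hspos : (0:ℝ) < s := by exact_mod_cast hs1
  have hsh2 : (2:ℝ) ≤ sh := by
    rw [hsh]; have : (1:ℝ) ≤ s := by exact_mod_cast hs1
    nlinarith
  have hb2 : (sh + 2) / 2 ^ (k'+1) ≤ 2 := by
    rw [div_le_iff₀ hKpos]
    have hs2' : (s:ℝ) ≤ 2 ^ k' := by exact_mod_cast hs2
    rw [hsh]; rw [pow_succ]; nlinarith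
  -- the substitution map
  set φ : ℝ → ℝ := fun θ => (sh + 2 * Real.cos θ) / 2 ^ (k'+1) with hφdef
  have hφmem : ∀ θ, φ θ ∈ Set.Icc (0:ℝ) 2 := by
    intro θ
    have h1 := Real.neg_one_le_cos θ
    have h2 := Real.cos_le_one θ
    constructor
    · apply div_nonneg _ hKpos.le; nlinarith
    · rw [div_le_iff₀ hKpos]
      have := hb2; rw [div_le_iff₀ hKpos] at this
      nlinarith
  have hφx : ∀ θ, 2 ^ (k'+1) * φ θ - sh = 2 * Real.cos θ := by
    intro θ; rw [hφdef]; field_simp; ring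
  have hφd : ∀ θ, HasDerivAt φ (2 * (-Real.sin θ) / 2 ^ (k'+1)) θ := by
    intro θ
    exact (((Real.hasDerivAt_cos θ).const_mul 2).const_add sh).div_const _
  -- derivatives of Y
  set s2 : Set ℝ := Set.Icc (0:ℝ) 2 with hs2def
  have hU : UniqueDiffOn ℝ s2 := uniqueDiffOn_Icc (by norm_num)
  set Z₁ : ℝ → ℝ := derivWithin Y s2 with hZ1def
  set Z₂ : ℝ → ℝ := derivWithin Z₁ s2 with hZ2def
  have hZ1cd : ContDiffOn ℝ 1 Z₁ s2 := hY.derivWithin hU (by norm_num)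
  have hZ1d : DifferentiableOn ℝ Z₁ s2 := hZ1cd.differentiableOn (by norm_num)
  have hZ1c : ContinuousOn Z₁ s2 := hZ1d.continuousOn
  have hZ2c : ContinuousOn Z₂ s2 := hZ1cd.continuousOn_derivWithin hU le_rfl
  have hYd : DifferentiableOn ℝ Y s2 := hY.differentiableOn (by norm_num)
  have hYc : ContinuousOn Y s2 := hY.continuousOn
  have hZ2b : ∀ x ∈ s2, |Z₂ x| ≤ H := by
    intro x hx
    have h2 := hY'' x hx
    rw [show (2:ℕ) = 1 + 1 from rfl, iteratedDerivWithin_succ',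
      iteratedDerivWithin_one] at h2
    exact h2
  -- composed functions
  set u : ℝ → ℝ := fun θ => Y (φ θ) with hudef
  set w : ℝ → ℝ := fun θ => Z₁ (φ θ) with hwdef
  have hφc : Continuous φ := by
    apply Continuous.div_const; exact continuous_const.add (continuous_const.mul Real.continuous_cos)
  have huc : Continuous u := hYc.comp_continuous hφc hφmem
  have hwc : Continuous w := hZ1c.comp_continuous hφc hφmem
  have hZ2φc : Continuous (fun θ => Z₂ (φ θ)) := hZ2c.comp_continuous hφc hφmem
  have hud : ∀ θ, HasDerivAt u ((2 * (-Real.sin θ) / 2 ^ (k'+1)) * Z₁ (φ θ)) θ := by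
    intro θ
    have := ((hYd (φ θ) (hφmem θ)).hasDerivWithinAt).scomp_hasDerivAt θ (hφd θ) hφmem
    rw [smul_eq_mul] at this; exact this
  have hwd : ∀ θ, HasDerivAt w ((2 * (-Real.sin θ) / 2 ^ (k'+1)) * Z₂ (φ θ)) θ := by
    intro θ
    have := ((hZ1d (φ θ) (hφmem θ)).hasDerivWithinAt).scomp_hasDerivAt θ (hφd θ) hφmem
    rw [smul_eq_mul] at this; exact this
  have hu'c : Continuous (fun θ => (2 * (-Real.sin θ) / 2 ^ (k'+1)) * Z₁ (φ θ)) := by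
    exact (Continuous.div_const (continuous_const.mul Real.continuous_sin.neg) _).mul hwc
  have hw'c : Continuous (fun θ => (2 * (-Real.sin θ) / 2 ^ (k'+1)) * Z₂ (φ θ)) := by
    exact (Continuous.div_const (continuous_const.mul Real.continuous_sin.neg) _).mul hZ2φc
  -- change of variables
  set c : ℝ := 2 ^ (((k'+1 : ℕ) : ℝ) / 2) * 2 / (2 ^ (k'+1) * Real.sqrt (2*π)) with hcdef
  have hcpos : 0 < c := by
    rw [hcdef]; positivity
  set J : ℝ := ∫ θ in (0:ℝ)..π, u θ * Real.cos (m*θ) with hJdef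
  have hab : (sh - 2) / 2 ^ (k'+1) ≤ (sh + 2) / 2 ^ (k'+1) := by
    apply div_le_div_of_nonneg_right ?_ hKpos.le
    linarith
  have hinj : Set.InjOn φ (Set.Ioo 0 π) := by
    intro x hx y hy hxy
    apply Real.injOn_cos (Set.Ioo_subset_Icc_self hx) (Set.Ioo_subset_Icc_self hy)
    rw [hφdef] at hxy
    simp only [div_eq_div_iff hKne hKne] at hxy
    have h2 := mul_right_cancel₀ hKne hxy
    linarith
  have himg : φ '' (Set.Ioo 0 π) = Set.Ioo ((sh-2)/2^(k'+1)) ((sh+2)/2^(k'+1)) := by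
    ext y
    simp only [Set.mem_image, Set.mem_Ioo]
    constructor
    · rintro ⟨θ, ⟨hθ1, hθ2⟩, rfl⟩
      have hc1 : Real.cos θ < 1 := by
        calc Real.cos θ < Real.cos 0 :=
              Real.strictAntiOn_cos ⟨le_refl 0, Real.pi_pos.le⟩ ⟨hθ1.le, hθ2.le⟩ hθ1
          _ = 1 := Real.cos_zero
      have hc2 : -1 < Real.cos θ := by
        calc (-1:ℝ) = Real.cos π := Real.cos_pi.symm
          _ < Real.cos θ :=
              Real.strictAntiOn_cos ⟨hθ1.le, hθ2.le⟩ ⟨Real.pi_pos.le, le_refl π⟩ hθ2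
      constructor
      · rw [hφdef]; apply div_lt_div_of_pos_right ?_ hKpos; linarith
      · rw [hφdef]; apply div_lt_div_of_pos_right ?_ hKpos; linarith
    · rintro ⟨hy1, hy2⟩
      have h1 : sh - 2 < 2^(k'+1)*y := by
        rw [div_lt_iff₀ hKpos] at hy1; linarith [mul_comm y ((2:ℝ)^(k'+1))]
      have h2 : 2^(k'+1)*y < sh + 2 := by
        rw [lt_div_iff₀ hKpos] at hy2; linarith [mul_comm y ((2:ℝ)^(k'+1))]
      set x0 : ℝ := (2^(k'+1)*y - sh)/2 with hx0
      have hx01 : -1 < x0 := by rw [hx0, lt_div_iff₀ (by norm_num : (0:ℝ) < 2)]; linarith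
      have hx02 : x0 < 1 := by rw [hx0, div_lt_iff₀ (by norm_num : (0:ℝ) < 2)]; linarith
      have harc : Real.arccos x0 < π := by
        refine lt_of_le_of_ne (Real.arccos_le_pi x0) fun h => ?_
        have hcc := Real.cos_arccos hx01.le hx02.le
        rw [h, Real.cos_pi] at hcc
        linarith
      refine ⟨Real.arccos x0, ⟨Real.arccos_pos.mpr hx02, harc⟩, ?_⟩
      rw [hφdef]
      simp only
      rw [Real.cos_arccos hx01.le hx02.le, hx0]
      field_simp
      ring
  have hΛeq : Λ m = c * J := by
    rw [hΛ m, intervalIntegral.integral_of_le hab, MeasureTheory.integral_Ioc_eq_integral_Ioo,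
      ← himg,
      MeasureTheory.integral_image_eq_integral_abs_deriv_smul measurableSet_Ioo
        (fun x _ => (hφd x).hasDerivWithinAt) hinj]
    rw [MeasureTheory.setIntegral_congr_fun measurableSet_Ioo
      (g := fun θ => c * (u θ * Real.cos (m*θ))) ?_]
    · rw [MeasureTheory.integral_const_mul, hJdef,
        intervalIntegral.integral_of_le Real.pi_pos.le, MeasureTheory.integral_Ioc_eq_integral_Ioo]
    · intro θ hθ
      obtain ⟨hθ1, hθ2⟩ := hθ
      have hsin : 0 < Real.sin θ := Real.sin_pos_of_pos_of_lt_pi hθ1 hθ2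
      have habs : |2 * (-Real.sin θ) / 2 ^ (k'+1)| = 2 * Real.sin θ / 2 ^ (k'+1) := by
        rw [show 2 * (-Real.sin θ) / 2 ^ (k'+1) = -(2 * Real.sin θ / 2 ^ (k'+1)) by ring, abs_neg,
          abs_of_nonneg (by positivity)]
      simp only [smul_eq_mul]
      rw [habs, hφx θ, VL_two_cos m θ]
      have h4 : 4 - (2*Real.cos θ)^2 = (2*Real.sin θ)^2 := by
        nlinarith [Real.sin_sq_add_cos_sq θ]
      rw [h4, Real.sqrt_sq (by positivity)]
      have hsq : Real.sqrt (2*π) ≠ 0 := by positivity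
      rw [hcdef, hudef]
      have hsne : Real.sin θ ≠ 0 := ne_of_gt hsin
      field_simp
  -- bound on J
  have hmc : (2:ℝ) ≤ (m:ℝ) := by exact_mod_cast hm
  have hm1ne : ((m:ℝ) - 1) ≠ 0 := by linarith
  have hmp1ne : ((m:ℝ) + 1) ≠ 0 := by linarith
  have hmne : (m:ℝ) ≠ 0 := by linarith
  have hm2pos : (0:ℝ) < (m:ℝ)^2 - 1 := by nlinarith
  have hcast1 : ((m - 1 : ℕ) : ℝ) = (m:ℝ) - 1 := by
    have := Nat.cast_sub (by omega : 1 ≤ m) (R := ℝ); simpa using this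
  have hcast2 : ((m + 1 : ℕ) : ℝ) = (m:ℝ) + 1 := by push_cast; ring
  have hwcos_int : ∀ r : ℝ, IntervalIntegrable (fun θ => w θ * Real.cos (r*θ)) volume 0 π :=
    fun r => (hwc.mul (Real.continuous_cos.comp (continuous_const.mul continuous_id))).intervalIntegrable 0 π
  have hSbound : ∀ n : ℕ, 1 ≤ n →
      |∫ θ in (0:ℝ)..π, w θ * Real.cos ((n:ℝ)*θ)| ≤ (1/(n:ℝ)) * (2 / 2^(k'+1) * H * π) := by
    intro n hn
    have hnpos : (0:ℝ) < (n:ℝ) := by exact_mod_cast hn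
    rw [ibp_cos hwd hw'c n hn, abs_mul, abs_neg, abs_of_nonneg (by positivity : (0:ℝ) ≤ 1/(n:ℝ))]
    apply mul_le_mul_of_nonneg_left ?_ (by positivity)
    have hbnd : ∀ x ∈ Set.uIoc (0:ℝ) π,
        ‖(2*(-Real.sin x)/2^(k'+1)) * Z₂ (φ x) * Real.sin ((n:ℝ)*x)‖ ≤ 2/2^(k'+1) * H := by
      intro x _
      rw [Real.norm_eq_abs, abs_mul, abs_mul]
      have e1 : |2*(-Real.sin x)/2^(k'+1)| = 2*|Real.sin x|/2^(k'+1) := by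
        rw [abs_div, abs_mul, abs_neg, abs_two, abs_of_nonneg hKpos.le]
      rw [e1]
      have h1 : |Real.sin x| ≤ 1 := abs_le.mpr ⟨Real.neg_one_le_sin x, Real.sin_le_one x⟩
      have h2 : |Real.sin ((n:ℝ)*x)| ≤ 1 := abs_le.mpr ⟨Real.neg_one_le_sin _, Real.sin_le_one _⟩
      have h3 : |Z₂ (φ x)| ≤ H := hZ2b _ (hφmem x)
      have ha : 2*|Real.sin x|/2^(k'+1) ≤ 2/2^(k'+1) := by
        apply div_le_div_of_nonneg_right ?_ hKpos.le
        linarith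
      calc 2*|Real.sin x|/2^(k'+1) * |Z₂ (φ x)| * |Real.sin ((n:ℝ)*x)|
          ≤ 2/2^(k'+1) * H * 1 := by
            apply mul_le_mul (mul_le_mul ha h3 (abs_nonneg _) (by positivity)) h2
              (abs_nonneg _) (by positivity)
        _ = 2/2^(k'+1) * H := mul_one _
    have := intervalIntegral.norm_integral_le_of_norm_le_const hbnd
    rw [Real.norm_eq_abs] at this
    calc |∫ θ in (0:ℝ)..π, (2*(-Real.sin θ)/2^(k'+1)) * Z₂ (φ θ) * Real.sin ((n:ℝ)*θ)|
        ≤ 2/2^(k'+1) * H * |π - 0| := this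
      _ = 2/2^(k'+1) * H * π := by rw [sub_zero, abs_of_nonneg Real.pi_pos.le]
  have hJ1 : J = -(1/(m:ℝ)) *
      ∫ θ in (0:ℝ)..π, ((2*(-Real.sin θ)/2^(k'+1)) * Z₁ (φ θ)) * Real.sin ((m:ℝ)*θ) :=
    ibp_cos hud hu'c m (by omega)
  have htrig : ∀ θ:ℝ, ((2*(-Real.sin θ)/2^(k'+1)) * Z₁ (φ θ)) * Real.sin ((m:ℝ)*θ)
      = -(1/2^(k'+1)) * (w θ * Real.cos (((m:ℝ)-1)*θ) - w θ * Real.cos (((m:ℝ)+1)*θ)) := by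
    intro θ
    rw [show ((m:ℝ)-1)*θ = (m:ℝ)*θ - θ by ring, show ((m:ℝ)+1)*θ = (m:ℝ)*θ + θ by ring,
      Real.cos_sub, Real.cos_add, hwdef]
    ring
  have hsplit : (∫ θ in (0:ℝ)..π, ((2*(-Real.sin θ)/2^(k'+1)) * Z₁ (φ θ)) * Real.sin ((m:ℝ)*θ))
      = -(1/2^(k'+1)) * ((∫ θ in (0:ℝ)..π, w θ * Real.cos (((m:ℝ)-1)*θ))
          - ∫ θ in (0:ℝ)..π, w θ * Real.cos (((m:ℝ)+1)*θ)) := by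
    simp_rw [htrig]
    rw [intervalIntegral.integral_const_mul,
      intervalIntegral.integral_sub (hwcos_int _) (hwcos_int _)]
  have hS1 := hSbound (m-1) (by omega)
  rw [hcast1] at hS1
  have hS2 := hSbound (m+1) (by omega)
  rw [hcast2] at hS2
  have hJbound : |J| ≤ 4 * π * H / ((2 ^ (k'+1) : ℝ)^2 * ((m:ℝ)^2 - 1)) := by
    calc |J| = (1/(m:ℝ)) * |∫ θ in (0:ℝ)..π,
          ((2*(-Real.sin θ)/2^(k'+1)) * Z₁ (φ θ)) * Real.sin ((m:ℝ)*θ)| := by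
          rw [hJ1, abs_mul, abs_neg, abs_of_nonneg (by positivity : (0:ℝ) ≤ 1/(m:ℝ))]
      _ = (1/(m:ℝ)) * ((1/2^(k'+1)) * |(∫ θ in (0:ℝ)..π, w θ * Real.cos (((m:ℝ)-1)*θ))
            - ∫ θ in (0:ℝ)..π, w θ * Real.cos (((m:ℝ)+1)*θ)|) := by
          rw [hsplit, abs_mul, abs_neg, abs_of_nonneg (by positivity : (0:ℝ) ≤ 1/(2:ℝ)^(k'+1))]
      _ ≤ (1/(m:ℝ)) * ((1/2^(k'+1)) * (|∫ θ in (0:ℝ)..π, w θ * Real.cos (((m:ℝ)-1)*θ)|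
            + |∫ θ in (0:ℝ)..π, w θ * Real.cos (((m:ℝ)+1)*θ)|)) := by
          gcongr
          exact abs_sub _ _
      _ ≤ (1/(m:ℝ)) * ((1/2^(k'+1)) * ((1/((m:ℝ)-1)) * (2/2^(k'+1)*H*π)
            + (1/((m:ℝ)+1)) * (2/2^(k'+1)*H*π))) := by
          refine mul_le_mul_of_nonneg_left (mul_le_mul_of_nonneg_left ?_ (by positivity))
            (by positivity)
          exact add_le_add hS1 hS2
      _ = 4 * π * H / ((2 ^ (k'+1) : ℝ)^2 * ((m:ℝ)^2 - 1)) := by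
          field_simp
          ring
  -- final arithmetic
  have hs52 : (0:ℝ) < (s:ℝ)^((5:ℝ)/2) := Real.rpow_pos_of_pos hspos _
  have habsΛ : |Λ m| ≤ c * (4*π*H/(((2:ℝ)^(k'+1))^2*((m:ℝ)^2-1))) := by
    rw [hΛeq, abs_mul, abs_of_nonneg hcpos.le]
    exact mul_le_mul_of_nonneg_left hJbound hcpos.le
  have hm2pos' : (0:ℝ) < (m:ℝ)^2 - 1 := hm2pos
  have hsle : (s:ℝ)^((5:ℝ)/2) ≤ (2:ℝ)^((k':ℝ)*(5/2)) := by
    have h1 : (s:ℝ) ≤ (2:ℝ)^k' := by exact_mod_cast hs2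
    calc (s:ℝ)^((5:ℝ)/2) ≤ ((2:ℝ)^k')^((5:ℝ)/2) :=
          Real.rpow_le_rpow hspos.le h1 (by norm_num)
      _ = (2:ℝ)^((k':ℝ)*(5/2)) := by
          rw [← Real.rpow_natCast 2 k', ← Real.rpow_mul (by norm_num : (0:ℝ) ≤ 2)]
  have heq : c * (4*π) / (((2:ℝ)^(k'+1))^2) = Real.sqrt π / (2:ℝ)^((k':ℝ)*(5/2)) := by
    rw [hcdef]
    rw [show ((2:ℝ)^(k'+1)) = (2:ℝ)^(((k'+1:ℕ)):ℝ) from (Real.rpow_natCast 2 (k'+1)).symm]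
    rw [Real.sqrt_mul (by norm_num : (0:ℝ) ≤ 2)]
    rw [show Real.sqrt 2 = (2:ℝ)^((1:ℝ)/2) from Real.sqrt_eq_rpow 2]
    have hsqrtπ : (0:ℝ) < Real.sqrt π := Real.sqrt_pos.mpr Real.pi_pos
    have hππ : π = Real.sqrt π * Real.sqrt π := (Real.mul_self_sqrt Real.pi_pos.le).symm
    rw [div_eq_div_iff (by positivity) (by positivity)]
    rw [show (((2:ℝ)^(((k'+1:ℕ)):ℝ))^2) = (2:ℝ)^((((k'+1:ℕ)):ℝ)*2) by
      rw [Real.rpow_mul (by norm_num : (0:ℝ) ≤ 2), Real.rpow_two]]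
    field_simp
    ring_nf
    rw [Real.sq_sqrt Real.pi_pos.le]
    have hA : (2:ℝ)^((1:ℝ)/2 + (k':ℝ)*(1/2)) * (2:ℝ)^((k':ℝ)*(5/2)) * 8
        = (2:ℝ)^((2:ℝ)+(k':ℝ)*2) * (2:ℝ)^((1:ℝ)+(k':ℝ)) * (2:ℝ)^((1:ℝ)/2) := by
      rw [show (8:ℝ) = (2:ℝ)^((3:ℝ)) by
        rw [show (3:ℝ) = ((3:ℕ):ℝ) by norm_num, Real.rpow_natCast]; norm_num]
      rw [← Real.rpow_add (by norm_num : (0:ℝ) < 2), ← Real.rpow_add (by norm_num : (0:ℝ) < 2),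
        ← Real.rpow_add (by norm_num : (0:ℝ) < 2), ← Real.rpow_add (by norm_num : (0:ℝ) < 2)]
      congr 1
      ring
    push_cast
    linear_combination (norm := ring_nf) π * hA
  have hkey : c * (4*π) / (((2:ℝ)^(k'+1))^2) ≤ Real.sqrt π / (s:ℝ)^((5:ℝ)/2) := by
    rw [heq]
    gcongr
  calc |Λ m| ≤ c * (4*π*H/(((2:ℝ)^(k'+1))^2*((m:ℝ)^2-1))) := habsΛ
    _ = (c * (4*π) / (((2:ℝ)^(k'+1))^2)) * (H/((m:ℝ)^2-1)) := by
        field_simp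
    _ ≤ (Real.sqrt π / (s:ℝ)^((5:ℝ)/2)) * (H/((m:ℝ)^2-1)) := by
        apply mul_le_mul_of_nonneg_right hkey (div_nonneg hH hm2pos.le)
    _ = H * Real.sqrt π / ((s:ℝ)^((5:ℝ)/2) * ((m:ℝ)^2-1)) := by
        field_simp [hs52.ne', hm2pos.ne']
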